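/- There is a bijection between the set H(m,n;k) of (m,n) hook-shape partitions of k and the set of pairs (mu, nu) of partitions with mu a partition of s, nu a partition of t, s + t = k, ell(mu) <= m, ell(nu) <= n, and mu_m >= ell(nu); the bijection sends lambda to (lambda^1, lambda^2), where lambda^1 = (lambda_1, ..., lambda_m) and lambda^2_j = max(lambda*_j - m, 0) for j = 1, ..., n, with lambda* the conjugate partition. -/

import Mathlib

/-- `f : ℕ → ℕ` (0-indexed parts) is a partition of `s`: weakly decreasing, with
all parts beyond the `s`-th equal to zero, summing to `s`. -/
def IsPartitionOf (f : ℕ → ℕ) (s : ℕ) : Prop :=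
  Antitone f ∧ (∀ i, s ≤ i → f i = 0) ∧ ∑ i ∈ Finset.range s, f i = s

/-- The number of nonzero parts of `f` (computed within the first `k` parts). -/
def plen (k : ℕ) (f : ℕ → ℕ) : ℕ :=
  ((Finset.range k).filter (fun i => f i ≠ 0)).card

/-- The conjugate partition: `pconj k f j` is the number of boxes in the `j`-th
(0-indexed) column of the Young diagram of `f`. -/
def pconj (k : ℕ) (f : ℕ → ℕ) (j : ℕ) : ℕ :=
  ((Finset.range k).filter (fun i => j < f i)).card

open Finset

lemma lt_pconj_iff {k : ℕ} {f : ℕ → ℕ} (hf : Antitone f) (h0 : ∀ i, k ≤ i → f i = 0)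
    (i j : ℕ) : i < pconj k f j ↔ j < f i := by
  constructor
  · intro h
    by_contra hc
    push_neg at hc
    have hsub : (Finset.range k).filter (fun i' => j < f i') ⊆ Finset.range i := by
      intro x hx
      simp only [Finset.mem_filter, Finset.mem_range] at hx ⊢
      by_contra hxi
      push_neg at hxi
      have : f x ≤ f i := hf hxi
      omega
    have := Finset.card_le_card hsub
    simp only [Finset.card_range] at this
    unfold pconj at h
    omega
  · intro h
    have hik : i < k := by
      by_contra hik; push_neg at hik
      rw [h0 i hik] at h; omega
    have hsub : Finset.range (i+1) ⊆ (Finset.range k).filter (fun i' => j < f i') := by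
      intro x hx
      simp only [Finset.mem_range] at hx
      simp only [Finset.mem_filter, Finset.mem_range]
      have : f i ≤ f x := hf (by omega)
      exact ⟨by omega, by omega⟩
    have := Finset.card_le_card hsub
    simp only [Finset.card_range] at this
    unfold pconj
    omega

lemma pconj_le_iff {k : ℕ} {f : ℕ → ℕ} (hf : Antitone f) (h0 : ∀ i, k ≤ i → f i = 0)
    (i j : ℕ) : pconj k f j ≤ i ↔ f i ≤ j := by
  have := lt_pconj_iff hf h0 i j
  omega

lemma pconj_antitone {k : ℕ} (f : ℕ → ℕ) : Antitone (pconj k f) := by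
  intro j j' h
  apply Finset.card_le_card
  intro x hx
  simp only [Finset.mem_filter, Finset.mem_range] at hx ⊢
  omega

lemma sum_pconj_gen (M K : ℕ) (g : ℕ → ℕ) :
    ∑ j ∈ range K, ((range M).filter (fun i => j < g i)).card
      = ∑ i ∈ range M, min (g i) K := by
  have h1 : ∀ j, ((range M).filter (fun i => j < g i)).card
      = ∑ i ∈ range M, if j < g i then 1 else 0 := by
    intro j; rw [Finset.card_filter]
  simp_rw [h1]
  rw [Finset.sum_comm]
  apply Finset.sum_congr rfl
  intro i _
  have : ((range K).filter (fun j => j < g i)) = range (min (g i) K) := by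
    ext x; simp only [Finset.mem_filter, Finset.mem_range]; omega
  calc ∑ j ∈ range K, (if j < g i then 1 else 0)
      = ((range K).filter (fun j => j < g i)).card := (Finset.card_filter _ _).symm
    _ = min (g i) K := by rw [this, Finset.card_range]

lemma sum_range_eq_of_zero {f : ℕ → ℕ} {a b : ℕ} (h0 : ∀ i, a ≤ i → f i = 0) (hab : a ≤ b) :
    ∑ i ∈ range b, f i = ∑ i ∈ range a, f i := by
  rw [← Finset.sum_range_add_sum_Ico f hab]
  have : ∑ i ∈ Finset.Ico a b, f i = 0 := by
    apply Finset.sum_eq_zero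
    intro x hx
    simp only [Finset.mem_Ico] at hx
    exact h0 x hx.1
  omega

lemma isPartitionOf_of {f : ℕ → ℕ} {K t : ℕ} (hf : Antitone f) (h0 : ∀ i, K ≤ i → f i = 0)
    (hs : ∑ i ∈ range K, f i = t) (htK : t ≤ K) : IsPartitionOf f t := by
  have hz : ∀ i, t ≤ i → f i = 0 := by
    intro i hti
    by_cases hiK : K ≤ i
    · exact h0 i hiK
    push_neg at hiK
    by_contra hne
    have hge : ∀ i' ∈ range (i+1), 1 ≤ f i' := by
      intro i' hi'
      simp only [Finset.mem_range] at hi'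
      have : f i ≤ f i' := hf (by omega)
      omega
    have h1 : (i+1) ≤ ∑ i' ∈ range (i+1), f i' := by
      calc (i+1) = ∑ _i' ∈ range (i+1), 1 := by simp
        _ ≤ _ := Finset.sum_le_sum hge
    have h2 : ∑ i' ∈ range (i+1), f i' ≤ ∑ i' ∈ range K, f i' := by
      apply Finset.sum_le_sum_of_subset
      intro x hx; simp only [Finset.mem_range] at hx ⊢; omega
    omega
  exact ⟨hf, hz, by rw [← sum_range_eq_of_zero hz htK]; exact hs⟩

lemma part_le {f : ℕ → ℕ} {k : ℕ} (hp : IsPartitionOf f k) (i : ℕ) : f i ≤ k := by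
  by_cases hik : k ≤ i
  · rw [hp.2.1 i hik]; omega
  · calc f i ≤ ∑ i' ∈ range k, f i' :=
        Finset.single_le_sum (fun _ _ => Nat.zero_le _) (by simp; omega)
    _ = k := hp.2.2

lemma plen_zero {f : ℕ → ℕ} {k m : ℕ} (hf : Antitone f) (h0 : ∀ i, k ≤ i → f i = 0)
    (hpl : plen k f ≤ m) : ∀ i, m ≤ i → f i = 0 := by
  intro i hmi
  by_cases hik : k ≤ i
  · exact h0 i hik
  push_neg at hik
  by_contra hne
  have hsub : Finset.range (i+1) ⊆ (Finset.range k).filter (fun i' => f i' ≠ 0) := by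
    intro x hx
    simp only [Finset.mem_range] at hx
    simp only [Finset.mem_filter, Finset.mem_range]
    have : f i ≤ f x := hf (by omega)
    constructor
    · omega
    · omega
  have := Finset.card_le_card hsub
  simp only [Finset.card_range] at this
  unfold plen at hpl
  omega

lemma pconj_zero_eq_plen (k : ℕ) (f : ℕ → ℕ) : pconj k f 0 = plen k f := by
  unfold pconj plen
  congr 1
  apply Finset.filter_congr
  intro x _
  simp only [ne_eq]
  omega

def mupart (m : ℕ) (f : ℕ → ℕ) : ℕ → ℕ := fun i => if i < m then f i else 0
def nupart (m n k : ℕ) (f : ℕ → ℕ) : ℕ → ℕ := fun j => if j < n then pconj k f j - m else 0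
def recon (m k : ℕ) (μ ν : ℕ → ℕ) : ℕ → ℕ := fun i => if i < m then μ i else pconj k ν (i - m)

lemma pconj_eq_zero_of_big {f : ℕ → ℕ} {k : ℕ} (hp : IsPartitionOf f k) {j : ℕ} (hj : k ≤ j) :
    pconj k f j = 0 := by
  have h := (pconj_le_iff hp.1 hp.2.1 0 j).2 (le_trans (part_le hp 0) hj)
  omega

lemma nupart_eq {m n k : ℕ} {f : ℕ → ℕ} (hp : IsPartitionOf f k) (hook : f m ≤ n) (j : ℕ) :
    nupart m n k f j = pconj k f j - m := by
  unfold nupart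
  by_cases hjn : j < n
  · simp [hjn]
  · push_neg at hjn
    have : pconj k f j ≤ m := (pconj_le_iff hp.1 hp.2.1 m j).2 (by omega)
    simp [hjn]
    omega

lemma fwd (m n k : ℕ) (hm : 0 < m) (f : ℕ → ℕ) (hp : IsPartitionOf f k) (hook : f m ≤ n) :
    ∃ s t : ℕ, s + t = k ∧
      IsPartitionOf (mupart m f) s ∧ IsPartitionOf (nupart m n k f) t ∧
      plen k (mupart m f) ≤ m ∧ plen k (nupart m n k f) ≤ n ∧
      plen k (nupart m n k f) ≤ (mupart m f) (m - 1) := by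
  obtain ⟨hf, h0, hsum⟩ := hp
  have hp : IsPartitionOf f k := ⟨hf, h0, hsum⟩
  set s := ∑ i ∈ range k, mupart m f i with hs
  set t := ∑ j ∈ range k, nupart m n k f j with ht
  -- s = ∑_{i<m} f i
  have hmu0 : ∀ i, k ≤ i → mupart m f i = 0 := by
    intro i hi; unfold mupart; simp [h0 i hi]
  have hmu0m : ∀ i, m ≤ i → mupart m f i = 0 := by
    intro i hi; unfold mupart; simp [Nat.not_lt.2 hi]
  have hsm : s = ∑ i ∈ range m, f i := by
    rw [hs, sum_range_eq_of_zero hmu0 (Nat.le_add_left k m) |>.symm,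
      sum_range_eq_of_zero hmu0m (by omega : m ≤ m + k)]
    apply Finset.sum_congr rfl
    intro i hi; simp only [Finset.mem_range] at hi
    unfold mupart; simp [hi]
  -- key counting: ∑_{j<k} min (pconj k f j) m = s
  have hmin : ∀ j, min (pconj k f j) m = ((range m).filter (fun i => j < f i)).card := by
    intro j
    have : ((range m).filter (fun i => j < f i)) = range (min (pconj k f j) m) := by
      ext i
      simp only [Finset.mem_filter, Finset.mem_range, ← lt_pconj_iff hf h0 i j]
      omega
    rw [this, Finset.card_range]
  have hstep1 : ∑ j ∈ range k, min (pconj k f j) m = s := by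
    simp_rw [hmin]
    rw [sum_pconj_gen m k f, hsm]
    apply Finset.sum_congr rfl
    intro i _
    have := part_le hp i
    omega
  have hstep3 : ∑ j ∈ range k, pconj k f j = k := by
    have h1 : ∑ j ∈ range k, pconj k f j = ∑ i ∈ range k, min (f i) k := sum_pconj_gen k k f
    have h2 : ∑ i ∈ range k, min (f i) k = ∑ i ∈ range k, f i :=
      Finset.sum_congr rfl (fun i _ => by have := part_le hp i; omega)
    rw [h1, h2, hsum]
  have hstk : s + t = k := by
    have : s + t = ∑ j ∈ range k, (min (pconj k f j) m + (pconj k f j - m)) := by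
      rw [Finset.sum_add_distrib, hstep1, ht]
      congr 1
      exact Finset.sum_congr rfl (fun j _ => nupart_eq hp hook j)
    have h4 : ∑ j ∈ range k, (min (pconj k f j) m + (pconj k f j - m))
        = ∑ j ∈ range k, pconj k f j :=
      Finset.sum_congr rfl (fun j _ => by omega)
    rw [this, h4, hstep3]
  refine ⟨s, t, hstk, ?_, ?_, ?_, ?_, ?_⟩
  · -- μ partition of s
    apply isPartitionOf_of (K := k) ?_ hmu0 hs.symm (by omega)
    intro i i' hii'
    unfold mupart
    by_cases h' : i' < m
    · have hi : i < m := by omega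
      simp only [if_pos h', if_pos hi]
      exact hf hii'
    · simp only [if_neg h']
      exact Nat.zero_le _
  · -- ν partition of t
    apply isPartitionOf_of (K := k) ?_ ?_ ht.symm (by omega)
    · intro j j' hjj'
      rw [nupart_eq hp hook, nupart_eq hp hook]
      have := pconj_antitone (k := k) f hjj'
      omega
    · intro j hj
      rw [nupart_eq hp hook, pconj_eq_zero_of_big hp hj]
      omega
  · -- plen μ ≤ m
    apply le_trans (Finset.card_le_card ?_) (le_of_eq (Finset.card_range m))
    intro i hi
    simp only [Finset.mem_filter, Finset.mem_range] at hi ⊢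
    by_contra him
    exact hi.2 (by unfold mupart; simp [him])
  · -- plen ν ≤ n
    apply le_trans (Finset.card_le_card ?_) (le_of_eq (Finset.card_range n))
    intro j hj
    simp only [Finset.mem_filter, Finset.mem_range] at hj ⊢
    by_contra hjn
    exact hj.2 (by unfold nupart; simp [hjn])
  · -- plen ν ≤ μ (m-1)
    have h1 : mupart m f (m - 1) = f (m - 1) := by unfold mupart; simp [show m - 1 < m by omega]
    rw [h1]
    apply le_trans (Finset.card_le_card ?_) (le_of_eq (Finset.card_range (f (m-1))))
    intro j hj
    simp only [Finset.mem_filter, Finset.mem_range] at hj ⊢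
    have hne := hj.2
    rw [nupart_eq hp hook] at hne
    have hmp : m < pconj k f j := by omega
    have := (lt_pconj_iff hf h0 m j).1 hmp
    have := hf (show m - 1 ≤ m by omega)
    omega

lemma leftinv {m n k : ℕ} {f : ℕ → ℕ} (hp : IsPartitionOf f k) (hook : f m ≤ n) :
    recon m k (mupart m f) (nupart m n k f) = f := by
  funext i
  unfold recon
  by_cases him : i < m
  · simp [him, mupart]
  · push_neg at him
    simp only [if_neg (Nat.not_lt.2 him)]
    -- pconj k (nupart m n k f) (i - m) = f i
    have h1 : ((range k).filter (fun j => i - m < nupart m n k f j))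
        = (range k).filter (fun j => j < f i) := by
      apply Finset.filter_congr
      intro j _
      rw [nupart_eq hp hook j]
      have hiff := lt_pconj_iff hp.1 hp.2.1 i j
      omega
    have h2 : ((range k).filter (fun j => j < f i)) = range (min (f i) k) := by
      ext x; simp only [Finset.mem_filter, Finset.mem_range]; omega
    have h3 := part_le hp i
    unfold pconj
    rw [h1, h2, Finset.card_range]
    omega

lemma rightinv {m n k : ℕ} (hm : 0 < m) {μ ν : ℕ → ℕ} {s t : ℕ} (hst : s + t = k)
    (hμ : IsPartitionOf μ s) (hν : IsPartitionOf ν t) (hlμ : plen k μ ≤ m)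
    (hlν : plen k ν ≤ n) (hcross : plen k ν ≤ μ (m - 1)) :
    IsPartitionOf (recon m k μ ν) k ∧ (recon m k μ ν) m ≤ n ∧
      mupart m (recon m k μ ν) = μ ∧ nupart m n k (recon m k μ ν) = ν := by
  have hsk : s ≤ k := by omega
  have htk : t ≤ k := by omega
  have hμ0k : ∀ i, k ≤ i → μ i = 0 := fun i hi => hμ.2.1 i (by omega)
  have hν0k : ∀ j, k ≤ j → ν j = 0 := fun j hj => hν.2.1 j (by omega)
  have hμ0m : ∀ i, m ≤ i → μ i = 0 := plen_zero hμ.1 hμ0k hlμ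
  have hν0n : ∀ j, n ≤ j → ν j = 0 := plen_zero hν.1 hν0k hlν
  have hνiff : ∀ i j, i < pconj k ν j ↔ j < ν i := lt_pconj_iff hν.1 hν0k
  have hνle : ∀ j, ν j ≤ t := part_le hν
  set g := recon m k μ ν with hg
  have hganti : Antitone g := by
    intro i i' hii'
    unfold g; unfold recon
    by_cases h' : i' < m
    · have hi : i < m := by omega
      simp only [if_pos h', if_pos hi]
      exact hμ.1 hii'
    · simp only [if_neg h']
      by_cases hi : i < m
      · simp only [if_pos hi]
        calc pconj k ν (i' - m) ≤ pconj k ν 0 := pconj_antitone ν (Nat.zero_le _)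
          _ = plen k ν := pconj_zero_eq_plen k ν
          _ ≤ μ (m - 1) := hcross
          _ ≤ μ i := hμ.1 (by omega)
      · simp only [if_neg hi]
        exact pconj_antitone ν (by omega)
  have hg0 : ∀ i, m + k ≤ i → g i = 0 := by
    intro i hi
    unfold g; unfold recon
    simp only [if_neg (show ¬ i < m by omega)]
    have := (pconj_le_iff hν.1 hν0k 0 (i - m)).2 (by have := hνle 0; omega)
    omega
  have hgsum : ∑ i ∈ range (m + k), g i = k := by
    rw [Finset.sum_range_add]
    have h1 : ∑ i ∈ range m, g i = s := by
      have e1 : ∀ i, i < m → g i = μ i := by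
        intro i hi; unfold g; unfold recon; simp [hi]
      have : ∑ i ∈ range m, g i = ∑ i ∈ range m, μ i :=
        Finset.sum_congr rfl (fun i hi => e1 i (Finset.mem_range.1 hi))
      rw [this, sum_range_eq_of_zero hμ0m (Nat.le_refl m) |>.symm]
      -- ∑_{i<m} μ = ∑_{i<s} μ = s
      have e2 : ∑ i ∈ range m, μ i = ∑ i ∈ range (m + s), μ i :=
        (sum_range_eq_of_zero hμ0m (by omega)).symm
      have e3 : ∑ i ∈ range (m + s), μ i = ∑ i ∈ range s, μ i :=
        sum_range_eq_of_zero hμ.2.1 (by omega)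
      rw [e2, e3, hμ.2.2]
    have h2 : ∑ d ∈ range k, g (m + d) = t := by
      have e1 : ∀ d, g (m + d) = pconj k ν d := by
        intro d; unfold g; unfold recon
        simp only [if_neg (show ¬ m + d < m by omega), Nat.add_sub_cancel_left]
      simp_rw [e1]
      have e2 : ∑ d ∈ range k, pconj k ν d = ∑ j ∈ range k, min (ν j) k := sum_pconj_gen k k ν
      have e3 : ∑ j ∈ range k, min (ν j) k = ∑ j ∈ range k, ν j :=
        Finset.sum_congr rfl (fun j _ => by have := hνle j; omega)
      rw [e2, e3, sum_range_eq_of_zero hν.2.1 htk, hν.2.2]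
    rw [h1, h2, hst]
  have hgp : IsPartitionOf g k := isPartitionOf_of hganti hg0 hgsum (by omega)
  have hgm : g m = plen k ν := by
    unfold g; unfold recon
    simp only [if_neg (lt_irrefl m), Nat.sub_self]
    exact pconj_zero_eq_plen k ν
  refine ⟨hgp, by rw [hgm]; exact hlν, ?_, ?_⟩
  · funext i
    unfold mupart
    by_cases hi : i < m
    · unfold g; unfold recon; simp [hi]
    · simp only [if_neg hi]
      exact (hμ0m i (by omega)).symm
  · funext j
    unfold nupart
    by_cases hjn : j < n
    · simp only [if_pos hjn]
      have hgiff := lt_pconj_iff hgp.1 hgp.2.1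
      -- upper bound
      have hub : pconj k g j ≤ m + ν j := by
        by_contra hc
        push_neg at hc
        have h1 : j < g (m + ν j) := (hgiff (m + ν j) j).1 hc
        have h2 : g (m + ν j) = pconj k ν (ν j) := by
          unfold g; unfold recon
          simp only [if_neg (show ¬ m + ν j < m by omega), Nat.add_sub_cancel_left]
        have h3 : ¬ j < pconj k ν (ν j) := by
          rw [hνiff]; omega
        rw [h2] at h1; exact h3 h1
      have hlb : ν j ≤ pconj k g j - m := by
        rcases Nat.eq_zero_or_pos (ν j) with h | h
        · omega
        · have h1 : g (m + ν j - 1) = pconj k ν (ν j - 1) := by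
            unfold g; unfold recon
            simp only [if_neg (show ¬ m + ν j - 1 < m by omega)]
            congr 1; omega
          have h2 : j < pconj k ν (ν j - 1) := (hνiff j (ν j - 1)).2 (by omega)
          have h3 : m + ν j - 1 < pconj k g j := by
            rw [hgiff, h1]; exact h2
          omega
      omega
    · simp only [if_neg hjn]
      exact (hν0n j (by omega)).symm

/-- There is a bijection between the set `H(m,n;k)` of `(m,n)` hook-shape partitions
of `k` (those with `λ_{m+1} ≤ n`) and the set of pairs `(μ, ν)` of partitions with
`μ ⊢ s`, `ν ⊢ t`, `s + t = k`, `ℓ(μ) ≤ m`, `ℓ(ν) ≤ n`, and `μ_m ≥ ℓ(ν)`; it sends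
`λ` to `(λ¹, λ²)` where `λ¹ = (λ_1, …, λ_m)` and `λ²_j = max(λ*_j − m, 0)` for
`j = 1, …, n`. -/
theorem hook_partition_bijection (m n k : ℕ) (hm : 0 < m) (hn : 0 < n) :
    ∃ e : {f : ℕ → ℕ // IsPartitionOf f k ∧ f m ≤ n} →
        {p : (ℕ → ℕ) × (ℕ → ℕ) // ∃ s t : ℕ, s + t = k ∧
          IsPartitionOf p.1 s ∧ IsPartitionOf p.2 t ∧
          plen k p.1 ≤ m ∧ plen k p.2 ≤ n ∧ plen k p.2 ≤ p.1 (m - 1)},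
      Function.Bijective e ∧
      ∀ lam : {f : ℕ → ℕ // IsPartitionOf f k ∧ f m ≤ n},
        (e lam).val =
          ((fun i => if i < m then lam.val i else 0),
           (fun j => if j < n then pconj k lam.val j - m else 0)) := by
  refine ⟨fun lam => ⟨(mupart m lam.val, nupart m n k lam.val),
      fwd m n k hm lam.val lam.prop.1 lam.prop.2⟩, ⟨?_, ?_⟩, fun lam => rfl⟩
  · intro a b hab
    have hval : (mupart m a.val, nupart m n k a.val)
        = (mupart m b.val, nupart m n k b.val) := congrArg Subtype.val hab
    apply Subtype.ext
    calc a.val = recon m k (mupart m a.val) (nupart m n k a.val) :=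
          (leftinv a.prop.1 a.prop.2).symm
      _ = recon m k (mupart m b.val) (nupart m n k b.val) := by
          obtain ⟨e1, e2⟩ := Prod.mk.injEq .. ▸ hval
          rw [e1, e2]
      _ = b.val := leftinv b.prop.1 b.prop.2
  · rintro ⟨⟨μ, ν⟩, s, t, hst, hμ, hν, h1, h2, h3⟩
    obtain ⟨hgp, hgm, hrecμ, hrecν⟩ := rightinv hm hst hμ hν h1 h2 h3
    exact ⟨⟨recon m k μ ν, hgp, hgm⟩, Subtype.ext (by simp only [hrecμ, hrecν])⟩
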